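/- Let N be a free abelian group of finite rank n and let γ₁, γ₂ be saturated subgroups of N such that γ₁ ∩ γ₂ = {0} and the subgroup γ₁ + γ₂ has rank n (equivalently, finite index in N). Then [N : γ₁ + γ₂] = [M : γ₁^⊥ + γ₂^⊥], where M = Hom(N, ℤ) is the dual lattice. -/

import Mathlib

/-- A subgroup `γ` of an abelian group is saturated if `k • x ∈ γ` implies
`k = 0` or `x ∈ γ`. -/
def IsSaturated {N : Type*} [AddCommGroup N] (γ : AddSubgroup N) : Prop :=
  ∀ (k : ℤ) (x : N), k • x ∈ γ → k = 0 ∨ x ∈ γ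

/-- The orthogonal of a subgroup `γ` of `N` inside the dual lattice `Hom(N, ℤ)`:
all homomorphisms vanishing identically on `γ`. -/
def perp {N : Type*} [AddCommGroup N] (γ : AddSubgroup N) : AddSubgroup (N →+ ℤ) where
  carrier := {f | ∀ x ∈ γ, f x = 0}
  zero_mem' := fun _ _ => rfl
  add_mem' := by intro f g hf hg x hx; simp [hf x hx, hg x hx]
  neg_mem' := by intro f hf x hx; simp [hf x hx]

@[simp]
theorem aux_mem_toIntSubmodule {N : Type*} [AddCommGroup N] (S : AddSubgroup N) (x : N) :
    x ∈ AddSubgroup.toIntSubmodule S ↔ x ∈ S :=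
  Iff.rfl

open Module in

lemma aux_exists_smul_mem_of_finrank_eq {N : Type*} [AddCommGroup N] [Module.Free ℤ N]
    [Module.Finite ℤ N] (Γ : Submodule ℤ N) (h : Module.finrank ℤ Γ = Module.finrank ℤ N)
    (x : N) : ∃ c : ℤ, c ≠ 0 ∧ c • x ∈ Γ := by
  classical
  set m := Module.finrank ℤ Γ with hm
  let b : Basis (Fin m) ℤ Γ := Module.finBasis ℤ Γ
  let u : Fin m → N := fun i => (b i : N)
  have hu : LinearIndependent ℤ u :=
    b.linearIndependent.map' Γ.subtype (Submodule.ker_subtype Γ)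
  have humem : ∀ i, u i ∈ Γ := fun i => (b i).2
  have hnotli : ¬ LinearIndependent ℤ (Fin.cons x u : Fin (m + 1) → N) := by
    intro hli
    have := hli.fintype_card_le_finrank
    simp [h] at this
  rw [Fintype.not_linearIndependent_iff] at hnotli
  obtain ⟨g, hg, i, hi⟩ := hnotli
  by_cases hg0 : g 0 = 0
  · exfalso
    have htail : ∑ j : Fin m, g j.succ • u j = 0 := by
      have := hg
      rw [Fin.sum_univ_succ] at this
      simpa [hg0] using this
    have hiz : ∀ j : Fin m, g j.succ = 0 :=
      Fintype.linearIndependent_iff.mp hu (fun j => g j.succ) htail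
    rcases Fin.eq_zero_or_eq_succ i with rfl | ⟨j, rfl⟩
    · exact hi hg0
    · exact hi (hiz j)
  · refine ⟨g 0, hg0, ?_⟩
    have hsum : g 0 • x + ∑ j : Fin m, g j.succ • u j = 0 := by
      have := hg
      rw [Fin.sum_univ_succ] at this
      simpa using this
    have heq : g 0 • x = -∑ j : Fin m, g j.succ • u j := by
      rw [eq_neg_iff_add_eq_zero]; exact hsum
    rw [heq]
    exact Γ.neg_mem (Submodule.sum_mem Γ (fun j _ => Γ.smul_mem _ (humem j)))

open Module in

lemma aux_exists_extension {N : Type*} [AddCommGroup N] [Module.Free ℤ N]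
    [Module.Finite ℤ N] (S : Submodule ℤ N)
    (hsat : ∀ (k : ℤ) (x : N), k • x ∈ S → k = 0 ∨ x ∈ S)
    (g : S →ₗ[ℤ] ℤ) : ∃ f : N →ₗ[ℤ] ℤ, ∀ x : S, f x = g x := by
  haveI : NoZeroSMulDivisors ℤ (N ⧸ S) := by
    refine ⟨fun {c y} hcy => ?_⟩
    obtain ⟨x, rfl⟩ := S.mkQ_surjective y
    rw [← map_smul, Submodule.mkQ_apply, Submodule.Quotient.mk_eq_zero] at hcy
    rcases hsat c x hcy with h | h
    · exact Or.inl h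
    · exact Or.inr (by rwa [Submodule.mkQ_apply, Submodule.Quotient.mk_eq_zero])
  obtain ⟨σ, hσ⟩ := Module.projective_lifting_property S.mkQ (LinearMap.id) S.mkQ_surjective
  have hρ : ∀ y : N, y - σ (S.mkQ y) ∈ S := by
    intro y
    rw [← Submodule.Quotient.mk_eq_zero, ← Submodule.mkQ_apply, map_sub]
    have : S.mkQ (σ (S.mkQ y)) = S.mkQ y := by
      have := congrArg (fun t => t (S.mkQ y)) hσ
      simpa using this
    rw [this, sub_self]
  let ρ : N →ₗ[ℤ] S := LinearMap.codRestrict S (LinearMap.id - σ ∘ₗ S.mkQ) hρ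
  refine ⟨g ∘ₗ ρ, fun x => ?_⟩
  have hx : ρ (x : N) = x := by
    ext
    simp only [ρ, LinearMap.codRestrict_apply, LinearMap.sub_apply, LinearMap.id_apply,
      LinearMap.comp_apply]
    have : S.mkQ (x : N) = 0 := by rw [Submodule.mkQ_apply, Submodule.Quotient.mk_eq_zero]; exact x.2
    rw [this, map_zero, sub_zero]
  simp [hx]

set_option maxHeartbeats 1000000 in
open Module in
/-- Let `N` be a free abelian group of finite rank `n` and `γ₁, γ₂` saturated subgroups
with `γ₁ ∩ γ₂ = {0}` and such that `γ₁ + γ₂` has rank `n`.  Then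
`[N : γ₁ + γ₂] = [M : γ₁^⊥ + γ₂^⊥]` where `M = Hom(N, ℤ)` is the dual lattice. -/
theorem stmt_11 {N : Type*} [AddCommGroup N] [Module.Free ℤ N] [Module.Finite ℤ N]
    (n : ℕ) (hn : Module.finrank ℤ N = n)
    (γ₁ γ₂ : AddSubgroup N) (h₁ : IsSaturated γ₁) (h₂ : IsSaturated γ₂)
    (hdisj : γ₁ ⊓ γ₂ = ⊥)
    (hrank : Module.finrank ℤ (AddSubgroup.toIntSubmodule (γ₁ ⊔ γ₂)) = n) :
    (γ₁ ⊔ γ₂).index = (perp γ₁ ⊔ perp γ₂).index := by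
  classical
  set S₁ : Submodule ℤ N := AddSubgroup.toIntSubmodule γ₁ with hS₁def
  set S₂ : Submodule ℤ N := AddSubgroup.toIntSubmodule γ₂ with hS₂def
  have hsup : AddSubgroup.toIntSubmodule (γ₁ ⊔ γ₂) = S₁ ⊔ S₂ := by
    rw [hS₁def, hS₂def]
    exact map_sup _ _ _
  have hdisj' : S₁ ⊓ S₂ = ⊥ := by
    rw [hS₁def, hS₂def, ← map_inf, hdisj]
    exact map_bot _
  -- the quotient Q = N / S₂ is free and finite
  haveI hQtf : NoZeroSMulDivisors ℤ (N ⧸ S₂) := by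
    refine ⟨fun {c y} hcy => ?_⟩
    obtain ⟨x, rfl⟩ := S₂.mkQ_surjective y
    rw [← map_smul, Submodule.mkQ_apply, Submodule.Quotient.mk_eq_zero] at hcy
    rcases h₂ c x (by simpa [hS₂def] using hcy) with h | h
    · exact Or.inl h
    · exact Or.inr (by rw [Submodule.mkQ_apply, Submodule.Quotient.mk_eq_zero]; simpa [hS₂def])
  set A : Submodule ℤ (N ⧸ S₂) := S₁.map S₂.mkQ with hAdef
  set ι := Module.Free.ChooseBasisIndex ℤ (N ⧸ S₂) with hιdef
  set bQ : Basis ι ℤ (N ⧸ S₂) := Module.Free.chooseBasis ℤ (N ⧸ S₂) with hbQdef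
  obtain ⟨k, snf⟩ := Submodule.smithNormalForm bQ A
  -- torsion of Q/A
  have hmapsup : (S₁ ⊔ S₂).map S₂.mkQ = A := by
    have h2 : S₂.map S₂.mkQ = ⊥ := by
      rw [eq_bot_iff]
      rintro y ⟨x, hx, rfl⟩
      simp only [Submodule.mem_bot, Submodule.mkQ_apply, Submodule.Quotient.mk_eq_zero]
      exact hx
    rw [Submodule.map_sup, h2, sup_bot_eq, hAdef]
  have htors : ∀ y : N ⧸ S₂, ∃ c : ℤ, c ≠ 0 ∧ c • y ∈ A := by
    intro y
    obtain ⟨x, rfl⟩ := S₂.mkQ_surjective y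
    obtain ⟨c, hc, hmem⟩ := aux_exists_smul_mem_of_finrank_eq (S₁ ⊔ S₂)
      (by rw [← hsup, hrank, hn]) x
    refine ⟨c, hc, ?_⟩
    rw [← map_smul]
    exact hmapsup ▸ Submodule.mem_map_of_mem hmem
  have hk : k = Fintype.card ι := by
    have le1 : k ≤ Fintype.card ι := by
      simpa using Fintype.card_le_of_embedding snf.f
    choose c hc hcmem using fun i : ι => htors (snf.bM i)
    have hli : LinearIndependent ℤ (fun i : ι => (⟨c i • snf.bM i, hcmem i⟩ : A)) := by
      rw [Fintype.linearIndependent_iff]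
      intro g hg i
      have hg' : ∑ j : ι, (g j * c j) • snf.bM j = 0 := by
        have hcoe := congrArg (fun t : A => (t : N ⧸ S₂)) hg
        simpa [mul_smul] using hcoe
      have hz := Fintype.linearIndependent_iff.mp snf.bM.linearIndependent _ hg'
      rcases mul_eq_zero.mp (hz i) with h | h
      · exact h
      · exact absurd h (hc i)
    have le2 : Fintype.card ι ≤ finrank ℤ A := hli.fintype_card_le_finrank
    have hfr : finrank ℤ A = k := by
      rw [finrank_eq_card_basis snf.bN, Fintype.card_fin]
    omega
  -- left hand side
  have hL : (γ₁ ⊔ γ₂).index = A.toAddSubgroup.index := by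
    have e1 : A.toAddSubgroup = AddSubgroup.map S₂.mkQ.toAddMonoidHom (γ₁ ⊔ γ₂) := by
      rw [← hmapsup, Submodule.map_toAddSubgroup]
      congr 1
      rw [← hsup, AddSubgroup.toIntSubmodule_toAddSubgroup]
    rw [e1, AddSubgroup.index_map_eq _ S₂.mkQ_surjective]
    intro x hx
    have hx' : x ∈ S₂ := by
      simpa [Submodule.Quotient.mk_eq_zero] using hx
    exact AddSubgroup.mem_sup_right (by simpa [hS₂def] using hx')
  have hLval : A.toAddSubgroup.index = ∏ i : Fin k, (snf.a i).natAbs := by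
    have := snf.toAddSubgroup_index_eq_pow_mul_prod
    rw [← hk, Nat.sub_self, pow_zero, one_mul] at this
    rw [this]
    refine Finset.prod_congr rfl fun i _ => ?_
    rw [Ideal.span_singleton_toAddSubgroup_eq_zmultiples, Int.index_zmultiples]
  -- choice of lifts β i ∈ γ₁ of the basis of A
  have hβex : ∀ i : Fin k, ∃ x, x ∈ γ₁ ∧ S₂.mkQ x = ((snf.bN i : N ⧸ S₂)) := by
    intro i
    obtain ⟨x, hx, hx'⟩ := Submodule.mem_map.mp (snf.bN i).2
    exact ⟨x, by simpa [hS₁def] using hx, hx'⟩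
  choose β hβ₁ hβ₂ using hβex
  have hrep : ∀ x ∈ γ₁, ∃ d : Fin k → ℤ, x = ∑ i, d i • β i := by
    intro x hx
    have hxS₁ : x ∈ S₁ := by simpa [hS₁def] using hx
    have hmem : S₂.mkQ x ∈ A := hAdef ▸ Submodule.mem_map_of_mem hxS₁
    set q : A := ⟨S₂.mkQ x, hmem⟩ with hqdef
    refine ⟨fun i => snf.bN.repr q i, ?_⟩
    have hrepr : ∑ i, snf.bN.repr q i • snf.bN i = q := snf.bN.sum_repr q
    have hcoe : ∑ i, snf.bN.repr q i • ((snf.bN i : N ⧸ S₂)) = S₂.mkQ x := by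
      have := congrArg (fun t : A => (t : N ⧸ S₂)) hrepr
      simp only [Submodule.coe_sum, Submodule.coe_smul] at this; exact this
    have hdiff2 : x - ∑ i, snf.bN.repr q i • β i ∈ S₂ := by
      rw [← Submodule.Quotient.mk_eq_zero, ← Submodule.mkQ_apply, map_sub, map_sum]
      simp only [map_smul, hβ₂]
      rw [hcoe, sub_self]
    have hdiff1 : x - ∑ i, snf.bN.repr q i • β i ∈ S₁ := by
      refine S₁.sub_mem hxS₁ (Submodule.sum_mem _ fun i _ => S₁.smul_mem _ ?_)
      simpa [hS₁def] using hβ₁ i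
    have hzero : x - ∑ i, snf.bN.repr q i • β i = 0 := by
      have hmem' := Submodule.mem_inf.mpr ⟨hdiff1, hdiff2⟩
      rw [hdisj'] at hmem'
      simpa using hmem'
    rw [← sub_eq_zero]
    exact hzero
  have hdvd : ∀ h : N →+ ℤ, h ∈ perp γ₂ → ∀ i, snf.a i ∣ h (β i) := by
    intro h hmem i
    have hker2 : S₂ ≤ LinearMap.ker h.toIntLinearMap := by
      intro x hx
      simp only [LinearMap.mem_ker, AddMonoidHom.coe_toIntLinearMap]
      exact hmem x (by simpa [hS₂def] using hx)
    set hbar := S₂.liftQ h.toIntLinearMap hker2 with hbardef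
    have hfact : ∀ x : N, hbar (S₂.mkQ x) = h x := fun x => rfl
    have hcalc : h (β i) = snf.a i * hbar (snf.bM (snf.f i)) := by
      rw [← hfact (β i), hβ₂ i, snf.snf i, map_smul, smul_eq_mul]
    exact ⟨_, hcalc⟩
  set Φ : (N →+ ℤ) →+ (Fin k → ℤ) :=
    { toFun := fun f i => f (β i),
      map_zero' := rfl,
      map_add' := fun f g => rfl } with hΦdef
  set U : AddSubgroup (Fin k → ℤ) :=
    AddSubgroup.pi Set.univ (fun i => AddSubgroup.zmultiples (snf.a i)) with hUdef
  have hker : perp γ₁ ⊔ perp γ₂ = AddSubgroup.comap Φ U := by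
    apply le_antisymm
    · refine sup_le ?_ ?_
      · intro f hf
        simp only [AddSubgroup.mem_comap, hUdef, AddSubgroup.mem_pi, Set.mem_univ, true_implies]
        intro i
        have : Φ f i = 0 := hf (β i) (hβ₁ i)
        rw [this]
        exact zero_mem _
      · intro f hf
        simp only [AddSubgroup.mem_comap, hUdef, AddSubgroup.mem_pi, Set.mem_univ, true_implies]
        intro i
        obtain ⟨e, he⟩ := hdvd f hf i
        exact AddSubgroup.mem_zmultiples_iff.mpr ⟨e, by rw [smul_eq_mul, mul_comm, ← he]; rfl⟩
    · intro f hf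
      simp only [AddSubgroup.mem_comap, hUdef, AddSubgroup.mem_pi, Set.mem_univ,
        true_implies] at hf
      have hdv : ∀ i, ∃ e : ℤ, f (β i) = snf.a i * e := by
        intro i
        obtain ⟨e, he⟩ := AddSubgroup.mem_zmultiples_iff.mp (hf i)
        refine ⟨e, ?_⟩
        have h0 : Φ f i = f (β i) := rfl
        rw [← h0, ← he, smul_eq_mul, mul_comm]
      choose c hc using hdv
      set hbar : (N ⧸ S₂) →ₗ[ℤ] ℤ :=
        snf.bM.constr ℤ (fun j => if hj : ∃ i, snf.f i = j then c hj.choose else 0) with hbardef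
      have hbar_basis : ∀ i, hbar (snf.bM (snf.f i)) = c i := by
        intro i
        rw [hbardef, Basis.constr_basis]
        have hj : ∃ i', snf.f i' = snf.f i := ⟨i, rfl⟩
        rw [dif_pos hj]
        exact congrArg c (snf.f.injective hj.choose_spec)
      set hhom : N →+ ℤ := (hbar ∘ₗ S₂.mkQ).toAddMonoidHom with hhomdef
      have hh2 : hhom ∈ perp γ₂ := by
        intro x hx
        have hx0 : S₂.mkQ x = 0 := by
          rw [Submodule.mkQ_apply, Submodule.Quotient.mk_eq_zero]
          simpa [hS₂def] using hx
        simp only [hhomdef, LinearMap.toAddMonoidHom_coe, LinearMap.comp_apply, hx0, map_zero]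
      have hval : ∀ i, hhom (β i) = f (β i) := by
        intro i
        have : hhom (β i) = hbar (S₂.mkQ (β i)) := rfl
        rw [this, hβ₂ i, snf.snf i, map_smul, hbar_basis, smul_eq_mul, ← hc i]
      have hg : f - hhom ∈ perp γ₁ := by
        intro x hx
        obtain ⟨d, rfl⟩ := hrep x hx
        rw [map_sum]
        refine Finset.sum_eq_zero fun i _ => ?_
        rw [map_zsmul]
        simp [hval i]
      have : f = (f - hhom) + hhom := by abel
      rw [this]
      exact AddSubgroup.add_mem_sup hg hh2
  have hsurj : Function.Surjective Φ := by
    have hsat₁ : ∀ (m : ℤ) (x : N), m • x ∈ S₁ → m = 0 ∨ x ∈ S₁ := by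
      intro m x hm
      rcases h₁ m x (by simpa [hS₁def] using hm) with h | h
      · exact Or.inl h
      · exact Or.inr (by simpa [hS₁def])
    have hli : LinearIndependent ℤ
        (fun i : Fin k => (⟨β i, by simpa [hS₁def] using hβ₁ i⟩ : S₁)) := by
      rw [Fintype.linearIndependent_iff]
      intro g hg
      have hg1 : ∑ i, g i • β i = 0 := by
        have := congrArg (fun t : S₁ => (t : N)) hg
        simpa using this
      have hg2 : ∑ i, g i • snf.bN i = 0 := by
        apply Subtype.ext
        have := congrArg S₂.mkQ hg1
        simpa [map_sum, map_smul, hβ₂] using this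
      exact Fintype.linearIndependent_iff.mp snf.bN.linearIndependent _ hg2
    have hsp : ⊤ ≤ Submodule.span ℤ
        (Set.range (fun i : Fin k => (⟨β i, by simpa [hS₁def] using hβ₁ i⟩ : S₁))) := by
      rintro ⟨x, hx⟩ -
      obtain ⟨d, hd⟩ := hrep x (by simpa [hS₁def] using hx)
      have : (⟨x, hx⟩ : S₁) = ∑ i, d i • (⟨β i, by simpa [hS₁def] using hβ₁ i⟩ : S₁) := by
        apply Subtype.ext
        simpa using hd
      rw [this]
      exact Submodule.sum_mem _ fun i _ =>
        Submodule.smul_mem _ _ (Submodule.subset_span ⟨i, rfl⟩)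
    set βB : Basis (Fin k) ℤ S₁ := Basis.mk hli hsp with hβBdef
    intro v
    obtain ⟨F, hF⟩ := aux_exists_extension S₁ hsat₁ (βB.constr ℤ v)
    refine ⟨F.toAddMonoidHom, ?_⟩
    funext i
    have h0 : Φ F.toAddMonoidHom i = F (β i) := rfl
    have h1 : (β i) = ((βB i : S₁) : N) := by rw [hβBdef, Basis.mk_apply]
    rw [h0, h1, hF (βB i), Basis.constr_basis]
  rw [hL, hLval, hker, AddSubgroup.index_comap_of_surjective _ hsurj, hUdef,
    AddSubgroup.index_pi]
  simp [Int.index_zmultiples]
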